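/- Let n > 2 and let ρ be a binary choice rule on ℝⁿ satisfying M1–M5 in which every attribute is non-null, and suppose in addition that the induced stochastic order is represented by U(x) = Σ_k x_k, i.e. ρ(x,y) ≥ 1/2 if and only if Σ_k x_k ≥ Σ_k y_k (for x ≠ y). Then for every z ∈ ℝⁿ with z ≠ 0 and Σ_k z_k ≥ 0, one has ρ(z, 0) = ρ(d⁺(z)·e₁ − d⁻(z)·e₂, 0), where d⁺(z) = Σ_{k : z_k ≥ 0} z_k, d⁻(z) = Σ_{k : z_k < 0} |z_k|, and e₁, e₂ are the first two standard basis vectors of ℝⁿ. -/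

import Mathlib

open Finset

variable {n : ℕ}

/-- A binary choice rule: values in [0,1] with ρ(x,y) = 1 - ρ(y,x). -/
def IsBCR {X : Type*} (ρ : X → X → ℝ) : Prop :=
  (∀ x y, ρ x y ∈ Set.Icc (0:ℝ) 1) ∧ ∀ x y, ρ x y = 1 - ρ y x

/-- M1 (Continuity). -/
def M1 (ρ : (Fin n → ℝ) → (Fin n → ℝ) → ℝ) : Prop :=
  ContinuousOn (fun p : (Fin n → ℝ) × (Fin n → ℝ) => ρ p.1 p.2) {p | p.1 ≠ p.2}

/-- M2 (Linearity). -/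
def M2 (ρ : (Fin n → ℝ) → (Fin n → ℝ) → ℝ) : Prop :=
  ∀ (x y z : Fin n → ℝ) (α : ℝ), 0 < α → α < 1 →
    ρ x y = ρ (α • x + (1 - α) • z) (α • y + (1 - α) • z)

/-- M3 (Moderate Transitivity). -/
def M3 {X : Type*} (ρ : X → X → ℝ) : Prop :=
  ∀ x y z, 1/2 ≤ ρ x y → 1/2 ≤ ρ y z →
    min (ρ x y) (ρ y z) < ρ x z ∨ (ρ x z = ρ x y ∧ ρ x z = ρ y z)

/-- The revealed dominance relation x >_D y. -/
def DomD (ρ : (Fin n → ℝ) → (Fin n → ℝ) → ℝ) (x y : Fin n → ℝ) : Prop :=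
  (∀ k, 1/2 ≤ ρ (Function.update y k (x k)) y) ∧
  ∃ k, 1/2 < ρ (Function.update y k (x k)) y

/-- M4 (Dominance). -/
def M4 (ρ : (Fin n → ℝ) → (Fin n → ℝ) → ℝ) : Prop :=
  ∀ x y, DomD ρ x y → ∀ w z, ρ w z ≤ ρ x y ∧ (¬ DomD ρ w z → ρ w z < ρ x y)

/-- M5 (Simplification). -/
def M5 (ρ : (Fin n → ℝ) → (Fin n → ℝ) → ℝ) : Prop :=
  ∀ x y x' : Fin n → ℝ, 1/2 ≤ ρ x y →
    (∃ i, x' i = y i ∧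
      ∀ j j', j ≠ i → j' ≠ i → x' j ≠ x j → x' j' ≠ x j' → j = j') →
    ρ x' x = 1/2 → ρ x y ≤ ρ x' y

/-- Attribute k is null. -/
def NullAttr (ρ : (Fin n → ℝ) → (Fin n → ℝ) → ℝ) (k : Fin n) : Prop :=
  ∀ x y z : Fin n → ℝ,
    ρ (Function.update z k (x k)) (Function.update z k (y k)) = 1/2

/-- L1-complexity representation (G, β). -/
def IsL1Rep (ρ : (Fin n → ℝ) → (Fin n → ℝ) → ℝ) (G : ℝ → ℝ) (β : Fin n → ℝ) : Prop :=
  (∀ k, β k ≠ 0) ∧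
  ContinuousOn G (Set.Icc (-1) 1) ∧
  StrictMonoOn G (Set.Icc (-1) 1) ∧
  (∀ r ∈ Set.Icc (-1:ℝ) 1, G r ∈ Set.Icc (0:ℝ) 1 ∧ G r = 1 - G (-r)) ∧
  ∀ x y : Fin n → ℝ, x ≠ y →
    ρ x y = G ((∑ k, β k * x k - ∑ k, β k * y k) / ∑ k, |β k * (x k - y k)|)




lemma rho_scale (ρ : (Fin n → ℝ) → (Fin n → ℝ) → ℝ) (hM2 : M2 ρ)
    (x y : Fin n → ℝ) (α : ℝ) (h0 : 0 < α) (h1 : α < 1) :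
    ρ x y = ρ (α • (x - y)) 0 := by
  have h := hM2 x y ((α / (α - 1)) • y) α h0 h1
  have hne : α - 1 ≠ 0 := by linarith
  have e1 : α • x + (1 - α) • ((α / (α - 1)) • y) = α • (x - y) := by
    funext k
    simp only [Pi.add_apply, Pi.smul_apply, Pi.sub_apply, smul_eq_mul]
    field_simp
    ring
  have key : (1 - α) * (α / (α - 1)) = -α := by
    field_simp
    ring
  have e2 : α • y + (1 - α) • ((α / (α - 1)) • y) = 0 := by
    funext k
    simp only [Pi.add_apply, Pi.smul_apply, Pi.zero_apply, smul_eq_mul, ← mul_assoc, key]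
    ring
  rw [h, e1, e2]

lemma rho_smul (ρ : (Fin n → ℝ) → (Fin n → ℝ) → ℝ) (hM2 : M2 ρ)
    (d : Fin n → ℝ) (c : ℝ) (hc : 0 < c) : ρ (c • d) 0 = ρ d 0 := by
  rcases lt_trichotomy c 1 with h | h | h
  · have := rho_scale ρ hM2 d 0 c hc h
    simpa using this.symm
  · simp [h]
  · have h2 : (0:ℝ) < 1 / c := by positivity
    have h3 : 1 / c < 1 := by
      rw [div_lt_one hc]; linarith
    have := rho_scale ρ hM2 (c • d) 0 (1/c) h2 h3
    rw [this]
    congr 1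
    funext k
    simp only [Pi.smul_apply, Pi.sub_apply, Pi.zero_apply, smul_eq_mul]
    field_simp
    ring

lemma rho_diff (ρ : (Fin n → ℝ) → (Fin n → ℝ) → ℝ) (hM2 : M2 ρ)
    (x y : Fin n → ℝ) : ρ x y = ρ (x - y) 0 := by
  have h := rho_scale ρ hM2 x y (1/2) (by norm_num) (by norm_num)
  rw [h, rho_smul ρ hM2 (x - y) (1/2) (by norm_num)]



def mrg (i j : Fin n) (r : Fin n → ℝ) : Fin n → ℝ :=
  Function.update (Function.update r i 0) j (r i + r j)

lemma mrg_apply (i j : Fin n) (r : Fin n → ℝ) (k : Fin n) :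
    mrg i j r k = if k = j then r i + r j else if k = i then 0 else r k := by
  simp [mrg, Function.update_apply]

lemma sum_two_congr {i j : Fin n} (hij : i ≠ j) (f g : Fin n → ℝ)
    (h : ∀ k, k ≠ i → k ≠ j → f k = g k) (h2 : f i + f j = g i + g j) :
    ∑ k, f k = ∑ k, g k := by
  have key : ∑ k ∈ ({i, j} : Finset (Fin n)), (f k - g k) = ∑ k, (f k - g k) := by
    apply Finset.sum_subset (Finset.subset_univ _)
    intro k _ hk
    simp only [Finset.mem_insert, Finset.mem_singleton, not_or] at hk
    rw [h k hk.1 hk.2]; ring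
  rw [Finset.sum_pair hij] at key
  have h3 : ∑ k, (f k - g k) = ∑ k, f k - ∑ k, g k := Finset.sum_sub_distrib f g
  rw [h3] at key
  linarith

lemma sum_mrg {i j : Fin n} (hij : i ≠ j) (r : Fin n → ℝ) :
    ∑ k, mrg i j r k = ∑ k, r k := by
  apply sum_two_congr hij
  · intro k hki hkj
    rw [mrg_apply, if_neg hkj, if_neg hki]
  · rw [mrg_apply, mrg_apply, if_neg hij, if_pos rfl, if_pos rfl]
    ring

lemma rho_eq_half (ρ : (Fin n → ℝ) → (Fin n → ℝ) → ℝ)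
    (hρ : ∀ x y, ρ x y = 1 - ρ y x)
    (hU : ∀ x y : Fin n → ℝ, x ≠ y → (1/2 ≤ ρ x y ↔ ∑ k, y k ≤ ∑ k, x k))
    {a b : Fin n → ℝ} (hne : a ≠ b) (hs : ∑ k, a k = ∑ k, b k) : ρ a b = 1/2 := by
  have h1 := (hU a b hne).2 hs.ge
  have h2 := (hU b a hne.symm).2 hs.le
  have h3 := hρ a b
  linarith

lemma step (ρ : (Fin n → ℝ) → (Fin n → ℝ) → ℝ)
    (hρ : ∀ x y, ρ x y = 1 - ρ y x) (hM5 : M5 ρ)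
    (hU : ∀ x y : Fin n → ℝ, x ≠ y → (1/2 ≤ ρ x y ↔ ∑ k, y k ≤ ∑ k, x k))
    {i j : Fin n} {r : Fin n → ℝ} (hij : i ≠ j) (hi : r i ≠ 0)
    (hs : 0 ≤ ∑ k, r k) : ρ r 0 ≤ ρ (mrg i j r) 0 := by
  have hr0 : r ≠ 0 := by
    intro h; exact hi (by rw [h]; rfl)
  have h1 : 1/2 ≤ ρ r 0 := (hU r 0 hr0).2 (by simpa using hs)
  have hmi : mrg i j r i = 0 := by rw [mrg_apply, if_neg hij, if_pos rfl]
  have hmne : mrg i j r ≠ r := by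
    intro h
    exact hi (by rw [← congrFun h i, hmi])
  have h2 : ρ (mrg i j r) r = 1/2 :=
    rho_eq_half ρ hρ hU hmne (sum_mrg hij r)
  refine hM5 r 0 (mrg i j r) h1 ⟨i, by simp [hmi], ?_⟩ h2
  intro j1 j2 hj1 hj2 hne1 hne2
  have e1 : j1 = j := by
    by_contra hc
    exact hne1 (by rw [mrg_apply, if_neg hc, if_neg hj1])
  have e2 : j2 = j := by
    by_contra hc
    exact hne2 (by rw [mrg_apply, if_neg hc, if_neg hj2])
  rw [e1, e2]

lemma merge_eq (ρ : (Fin n → ℝ) → (Fin n → ℝ) → ℝ)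
    (hρ : ∀ x y, ρ x y = 1 - ρ y x) (hM2 : M2 ρ) (hM3 : M3 ρ) (hM5 : M5 ρ)
    (hU : ∀ x y : Fin n → ℝ, x ≠ y → (1/2 ≤ ρ x y ↔ ∑ k, y k ≤ ∑ k, x k))
    {i j : Fin n} {r : Fin n → ℝ} (hij : i ≠ j) (hsame : 0 < r i * r j)
    (hs : 0 ≤ ∑ k, r k) : ρ (mrg i j r) 0 = ρ r 0 := by
  have hi : r i ≠ 0 := fun h => by simp [h] at hsame
  have hj : r j ≠ 0 := fun h => by simp [h] at hsame
  set s : ℝ := r i + r j with hsdef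
  have hsig : (0 < r i ∧ 0 < r j ∧ 0 < s) ∨ (r i < 0 ∧ r j < 0 ∧ s < 0) := by
    rcases lt_or_gt_of_ne hi with h | h
    · right
      have : r j < 0 := by nlinarith
      exact ⟨h, this, by simp only [hsdef]; linarith⟩
    · left
      have : 0 < r j := by nlinarith
      exact ⟨h, this, by simp only [hsdef]; linarith⟩
  have hsne : s ≠ 0 := by rcases hsig with ⟨_, _, h⟩ | ⟨_, _, h⟩ <;> linarith
  set lam : ℝ := r j / s with hlam
  have hlam0 : 0 < lam := by
    rcases hsig with ⟨_, h1, h2⟩ | ⟨h1, h2, h3⟩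
    · exact div_pos h1 h2
    · exact div_pos_of_neg_of_neg h2 h3
  have hlam1 : 0 < 1 - lam := by
    have : 1 - lam = r i / s := by
      rw [hlam]
      field_simp
      rw [hsdef]; ring
    rw [this]
    rcases hsig with ⟨h1, _, h2⟩ | ⟨h1, h2, h3⟩
    · exact div_pos h1 h2
    · exact div_pos_of_neg_of_neg h1 h3
  set A : Fin n → ℝ := mrg i j r with hA
  set B : Fin n → ℝ := mrg j i r with hB
  have hAj : A j = s := by rw [hA, mrg_apply, if_pos rfl]
  have hBi : B i = s := by rw [hB, mrg_apply, if_pos rfl]; rw [hsdef]; ring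
  have hAne : A ≠ 0 := fun h => hsne (by rw [← hAj, h]; rfl)
  have hBne : B ≠ 0 := fun h => hsne (by rw [← hBi, h]; rfl)
  have hAsum : ∑ k, A k = ∑ k, r k := sum_mrg hij r
  have hBsum : ∑ k, B k = ∑ k, r k := sum_mrg hij.symm r
  have hAhalf : 1/2 ≤ ρ A 0 := (hU A 0 hAne).2 (by simpa [hAsum] using hs)
  have hBhalf : 1/2 ≤ ρ B 0 := (hU B 0 hBne).2 (by simpa [hBsum] using hs)
  have decomp : r = lam • A + (1 - lam) • B := by
    funext k
    simp only [Pi.add_apply, Pi.smul_apply, smul_eq_mul, hA, hB, mrg_apply]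
    rcases eq_or_ne k i with rfl | hki
    · rw [if_neg hij, if_pos rfl, if_pos rfl]
      rw [hlam]
      field_simp
      rw [hsdef]; ring
    · rcases eq_or_ne k j with rfl | hkj
      · rw [if_pos rfl, if_neg hij.symm, if_pos rfl]
        rw [hlam]
        field_simp
        rw [hsdef]; ring
      · rw [if_neg hkj, if_neg hki, if_neg hki, if_neg hkj]
        ring
  set y : Fin n → ℝ := (1 - lam) • B with hy
  have e1 : ρ r y = ρ A 0 := by
    have hd : r - y = lam • A := by rw [decomp, hy]; abel
    rw [rho_diff ρ hM2 r y, hd, rho_smul ρ hM2 A lam hlam0]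
  have e2 : ρ y 0 = ρ B 0 := by
    rw [hy, rho_smul ρ hM2 B (1 - lam) hlam1]
  have stepA : ρ r 0 ≤ ρ A 0 := step ρ hρ hM5 hU hij hi hs
  have stepB : ρ r 0 ≤ ρ B 0 := step ρ hρ hM5 hU hij.symm hj hs
  have hm3 := hM3 r y 0 (by rw [e1]; exact hAhalf) (by rw [e2]; exact hBhalf)
  rcases hm3 with h | ⟨h1, _⟩
  · rw [e1, e2] at h
    have := le_min stepA stepB
    linarith [min_le_left (ρ A 0) (ρ B 0), min_le_right (ρ A 0) (ρ B 0)]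
  · rw [e1] at h1
    exact h1.symm

lemma move_eq (ρ : (Fin n → ℝ) → (Fin n → ℝ) → ℝ)
    (hρ : ∀ x y, ρ x y = 1 - ρ y x) (hM2 : M2 ρ) (hM3 : M3 ρ) (hM5 : M5 ρ)
    (hU : ∀ x y : Fin n → ℝ, x ≠ y → (1/2 ≤ ρ x y ↔ ∑ k, y k ≤ ∑ k, x k))
    {i j : Fin n} {r : Fin n → ℝ} (hij : i ≠ j) (hj : r j = 0)
    (hs : 0 ≤ ∑ k, r k) : ρ (mrg i j r) 0 = ρ r 0 := by
  by_cases hi : r i = 0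
  · have : mrg i j r = r := by
      funext k
      rw [mrg_apply]
      rcases eq_or_ne k j with rfl | hkj
      · rw [if_pos rfl, hi, hj]; ring
      · rcases eq_or_ne k i with rfl | hki
        · rw [if_neg hkj, if_pos rfl, hi]
        · rw [if_neg hkj, if_neg hki]
    rw [this]
  · set r0 : Fin n → ℝ := Function.update (Function.update r i (r i / 2)) j (r i / 2) with hr0
    have hr0app : ∀ k, r0 k = if k = j then r i / 2 else if k = i then r i / 2 else r k := by
      intro k
      simp [hr0, Function.update_apply]
    have h1 : mrg i j r0 = mrg i j r := by
      funext k
      rw [mrg_apply, mrg_apply, hr0app i, hr0app j, if_neg hij, if_pos rfl, if_pos rfl]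
      rcases eq_or_ne k j with rfl | hkj
      · rw [if_pos rfl, if_pos rfl, hj]; ring
      · rw [if_neg hkj, if_neg hkj]
        rcases eq_or_ne k i with rfl | hki
        · rw [if_pos rfl, if_pos rfl]
        · rw [if_neg hki, if_neg hki, hr0app k, if_neg hkj, if_neg hki]
    have h2 : mrg j i r0 = r := by
      funext k
      rw [mrg_apply, hr0app j, hr0app i, if_pos rfl, if_neg hij, if_pos rfl]
      rcases eq_or_ne k i with rfl | hki
      · rw [if_pos rfl]; ring
      · rw [if_neg hki]
        rcases eq_or_ne k j with rfl | hkj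
        · rw [if_pos rfl, hj]
        · rw [if_neg hkj, hr0app k, if_neg hkj, if_neg hki]
    have hsum0 : ∑ k, r0 k = ∑ k, r k := by
      apply sum_two_congr hij
      · intro k hki hkj
        rw [hr0app k, if_neg hkj, if_neg hki]
      · rw [hr0app i, hr0app j, if_neg hij, if_pos rfl, if_pos rfl, hj]; ring
    have hs0 : 0 ≤ ∑ k, r0 k := by rw [hsum0]; exact hs
    have hsign : 0 < r0 i * r0 j := by
      rw [hr0app i, hr0app j, if_neg hij, if_pos rfl, if_pos rfl]
      have h : r i / 2 ≠ 0 := by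
        intro h; exact hi (by linarith [h])
      exact mul_self_pos.mpr h
    have hsign' : 0 < r0 j * r0 i := by linarith [hsign]
    calc ρ (mrg i j r) 0 = ρ (mrg i j r0) 0 := by rw [h1]
      _ = ρ r0 0 := merge_eq ρ hρ hM2 hM3 hM5 hU hij hsign hs0
      _ = ρ (mrg j i r0) 0 := (merge_eq ρ hρ hM2 hM3 hM5 hU hij.symm hsign' hs0).symm
      _ = ρ r 0 := by rw [h2]

def two (p q : Fin n) (a b : ℝ) : Fin n → ℝ :=
  fun k => if k = p then a else if k = q then b else 0

lemma sum_two {p q : Fin n} (hpq : p ≠ q) (a b : ℝ) :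
    ∑ k, two p q a b k = a + b := by
  have h : ∑ k ∈ ({p, q} : Finset (Fin n)), two p q a b k = ∑ k, two p q a b k := by
    apply Finset.sum_subset (Finset.subset_univ _)
    intro k _ hk
    simp only [Finset.mem_insert, Finset.mem_singleton, not_or] at hk
    simp [two, hk.1, hk.2]
  rw [← h, Finset.sum_pair hpq]
  simp [two, hpq.symm]

lemma mrg_two_fst {p q c : Fin n} (hpq : p ≠ q) (hcp : c ≠ p) (hcq : c ≠ q) (a b : ℝ) :
    mrg p c (two p q a b) = two c q a b := by
  funext k
  rw [mrg_apply]
  rcases eq_or_ne k c with rfl | hkc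
  · rw [if_pos rfl]
    simp [two, hcp, hcq, hpq]
  · rw [if_neg hkc]
    rcases eq_or_ne k p with rfl | hkp
    · rw [if_pos rfl]
      simp [two, hcp.symm, hpq]
    · rw [if_neg hkp]
      simp [two, hkp, hkc]

lemma mrg_two_snd {p q c : Fin n} (hpq : p ≠ q) (hcp : c ≠ p) (hcq : c ≠ q) (a b : ℝ) :
    mrg q c (two p q a b) = two p c a b := by
  funext k
  rw [mrg_apply]
  rcases eq_or_ne k c with rfl | hkc
  · rw [if_pos rfl]
    simp [two, hcp, hcq, hpq.symm]
  · rw [if_neg hkc]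
    rcases eq_or_ne k q with rfl | hkq
    · rw [if_pos rfl]
      simp [two, hcq.symm, hpq.symm]
    · rw [if_neg hkq]
      simp [two, hkq, hkc]

lemma two_comm {p q : Fin n} (hpq : p ≠ q) (a b : ℝ) :
    two p q a b = two q p b a := by
  funext k
  simp only [two]
  rcases eq_or_ne k p with rfl | hkp
  · simp [hpq]
  · simp [hkp]

/-- Relocation: ρ (two p q a b) 0 = ρ (two p' q' a b) 0 whenever everything is
well-formed, via a sequence of `move_eq` steps. -/
lemma place (hn : 2 < n) (ρ : (Fin n → ℝ) → (Fin n → ℝ) → ℝ)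
    (hρ : ∀ x y, ρ x y = 1 - ρ y x) (hM2 : M2 ρ) (hM3 : M3 ρ) (hM5 : M5 ρ)
    (hU : ∀ x y : Fin n → ℝ, x ≠ y → (1/2 ≤ ρ x y ↔ ∑ k, y k ≤ ∑ k, x k))
    {p q : Fin n} (hpq : p ≠ q) (a b : ℝ) (hs : 0 ≤ a + b) :
    ρ (two p q a b) 0 =
      ρ (two ⟨0, by omega⟩ ⟨1, by omega⟩ a b) 0 := by
  set p0 : Fin n := ⟨0, by omega⟩ with hp0
  set p1 : Fin n := ⟨1, by omega⟩ with hp1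
  set p2 : Fin n := ⟨2, by omega⟩ with hp2
  have h01 : p0 ≠ p1 := by simp [hp0, hp1, Fin.ext_iff]
  have h02 : p0 ≠ p2 := by simp [hp0, hp2, Fin.ext_iff]
  have h12 : p1 ≠ p2 := by simp [hp1, hp2, Fin.ext_iff]
  -- helper: a single move step for `two` vectors
  have mv1 : ∀ (p' q' c : Fin n), p' ≠ q' → c ≠ p' → c ≠ q' →
      ρ (two p' q' a b) 0 = ρ (two c q' a b) 0 := by
    intro p' q' c h1 h2 h3
    have hz : two p' q' a b c = 0 := by simp [two, h2, h3]
    have hsum : 0 ≤ ∑ k, two p' q' a b k := by rw [sum_two h1]; exact hs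
    have := move_eq ρ hρ hM2 hM3 hM5 hU (Ne.symm h2) hz hsum
    rw [mrg_two_fst h1 h2 h3] at this
    exact this.symm
  have mv2 : ∀ (p' q' c : Fin n), p' ≠ q' → c ≠ p' → c ≠ q' →
      ρ (two p' q' a b) 0 = ρ (two p' c a b) 0 := by
    intro p' q' c h1 h2 h3
    have hz : two p' q' a b c = 0 := by simp [two, h2, h3]
    have hsum : 0 ≤ ∑ k, two p' q' a b k := by rw [sum_two h1]; exact hs
    have := move_eq ρ hρ hM2 hM3 hM5 hU (Ne.symm h3) hz hsum
    rw [mrg_two_snd h1 h2 h3] at this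
    exact this.symm
  rcases eq_or_ne q p0 with rfl | hq0
  · rcases eq_or_ne p p1 with rfl | hp1ne
    · -- p = p1, q = p0 : three-step swap via p2
      rw [mv2 p1 p0 p2 hpq h12.symm h02.symm,
          mv1 p1 p2 p0 h12 (Ne.symm hpq) h02,
          mv2 p0 p2 p1 h02 h01.symm h12]
    · -- q = p0, p ≠ p1 : move b to p1, then a to p0
      rw [mv2 p p0 p1 hpq (Ne.symm hp1ne) h01.symm,
          mv1 p p1 p0 hp1ne hpq.symm h01]
  · -- q ≠ p0
    rcases eq_or_ne p p0 with rfl | hp0ne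
    · rcases eq_or_ne q p1 with rfl | hq1
      · rfl
      · exact mv2 p0 q p1 hpq h01.symm (Ne.symm hq1)
    · rw [mv1 p q p0 hpq (Ne.symm hp0ne) (Ne.symm hq0)]
      rcases eq_or_ne q p1 with rfl | hq1
      · rfl
      · exact mv2 p0 q p1 hq0.symm h01.symm (Ne.symm hq1)

noncomputable def dp (r : Fin n → ℝ) : ℝ := ∑ k, if 0 ≤ r k then r k else 0
noncomputable def dm (r : Fin n → ℝ) : ℝ := ∑ k, if r k < 0 then -r k else 0

lemma dp_mrg {i j : Fin n} {r : Fin n → ℝ} (hij : i ≠ j) (hsame : 0 < r i * r j) :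
    dp (mrg i j r) = dp r := by
  have hsig : (0 < r i ∧ 0 < r j) ∨ (r i < 0 ∧ r j < 0) := by
    rcases lt_trichotomy (r i) 0 with h | h | h
    · right; exact ⟨h, by nlinarith⟩
    · simp [h] at hsame
    · left; exact ⟨h, by nlinarith⟩
  apply sum_two_congr hij
  · intro k hki hkj
    rw [mrg_apply, if_neg hkj, if_neg hki]
  · rw [mrg_apply, mrg_apply, if_neg hij, if_pos rfl, if_pos rfl]
    rcases hsig with ⟨h1, h2⟩ | ⟨h1, h2⟩ <;> split_ifs <;> linarith

lemma dm_mrg {i j : Fin n} {r : Fin n → ℝ} (hij : i ≠ j) (hsame : 0 < r i * r j) :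
    dm (mrg i j r) = dm r := by
  have hsig : (0 < r i ∧ 0 < r j) ∨ (r i < 0 ∧ r j < 0) := by
    rcases lt_trichotomy (r i) 0 with h | h | h
    · right; exact ⟨h, by nlinarith⟩
    · simp [h] at hsame
    · left; exact ⟨h, by nlinarith⟩
  apply sum_two_congr hij
  · intro k hki hkj
    rw [mrg_apply, if_neg hkj, if_neg hki]
  · rw [mrg_apply, mrg_apply, if_neg hij, if_pos rfl, if_pos rfl]
    rcases hsig with ⟨h1, h2⟩ | ⟨h1, h2⟩ <;> split_ifs <;> linarith

lemma main_ind (hn : 2 < n) (ρ : (Fin n → ℝ) → (Fin n → ℝ) → ℝ)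
    (hρ : ∀ x y, ρ x y = 1 - ρ y x) (hM2 : M2 ρ) (hM3 : M3 ρ) (hM5 : M5 ρ)
    (hU : ∀ x y : Fin n → ℝ, x ≠ y → (1/2 ≤ ρ x y ↔ ∑ k, y k ≤ ∑ k, x k)) :
    ∀ N : ℕ, ∀ r : Fin n → ℝ,
      (Finset.univ.filter (fun k => r k ≠ 0)).card ≤ N → r ≠ 0 → 0 ≤ ∑ k, r k →
      ρ r 0 = ρ (two ⟨0, by omega⟩ ⟨1, by omega⟩ (dp r) (-(dm r))) 0 := by
  intro N
  induction N with
  | zero =>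
    intro r hcard hne _
    exfalso
    apply hne
    funext k
    by_contra hk
    have : k ∈ Finset.univ.filter (fun k => r k ≠ 0) := by
      simp only [Finset.mem_filter, Finset.mem_univ, true_and]
      exact fun h => hk (by rw [h]; rfl)
    have := Finset.card_pos.mpr ⟨k, this⟩
    omega
  | succ N ih =>
    intro r hcard hne hs
    by_cases hpair : ∃ i j, i ≠ j ∧ 0 < r i * r j
    · obtain ⟨i, j, hij, hsame⟩ := hpair
      have hi : r i ≠ 0 := fun h => by simp [h] at hsame
      have hj : r j ≠ 0 := fun h => by simp [h] at hsame
      have hme := merge_eq ρ hρ hM2 hM3 hM5 hU hij hsame hs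
      have hsne : r i + r j ≠ 0 := by
        rcases lt_trichotomy (r i) 0 with h | h | h
        · have : r j < 0 := by nlinarith
          linarith
        · exact absurd h hi
        · have : 0 < r j := by nlinarith
          linarith
      have hmne : mrg i j r ≠ 0 := by
        intro h
        apply hsne
        have := congrFun h j
        rwa [mrg_apply, if_pos rfl] at this
      have hmsum : 0 ≤ ∑ k, mrg i j r k := by rw [sum_mrg hij]; exact hs
      have hsubset : Finset.univ.filter (fun k => mrg i j r k ≠ 0) ⊆
          (Finset.univ.filter (fun k => r k ≠ 0)).erase i := by
        intro k hk
        simp only [Finset.mem_filter, Finset.mem_univ, true_and] at hk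
        rw [Finset.mem_erase]
        constructor
        · intro h
          subst h
          exact hk (by rw [mrg_apply, if_neg hij, if_pos rfl])
        · simp only [Finset.mem_filter, Finset.mem_univ, true_and]
          rcases eq_or_ne k j with rfl | hkj
          · exact hj
          · rcases eq_or_ne k i with rfl | hki
            · intro _; exact hk (by rw [mrg_apply, if_neg hij, if_pos rfl])
            · intro h; exact hk (by rw [mrg_apply, if_neg hkj, if_neg hki]; exact h)
      have hmem : i ∈ Finset.univ.filter (fun k => r k ≠ 0) := by
        simp only [Finset.mem_filter, Finset.mem_univ, true_and]; exact hi
      have hcard' : (Finset.univ.filter (fun k => mrg i j r k ≠ 0)).card ≤ N := by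
        have h1 := Finset.card_le_card hsubset
        have h2 := Finset.card_erase_of_mem hmem
        have h3 := Finset.card_pos.mpr ⟨i, hmem⟩
        omega
      have hrec := ih (mrg i j r) hcard' hmne hmsum
      rw [← hme, hrec, dp_mrg hij hsame, dm_mrg hij hsame]
    · push_neg at hpair
      -- no same-sign pair: at most one positive and one negative coordinate
      have hex : ∃ p, 0 < r p := by
        by_contra hc
        push_neg at hc
        apply hne
        funext k
        have h1 : ∑ k, r k ≤ 0 := Finset.sum_nonpos (fun k _ => hc k)
        have h2 : ∑ k, r k = 0 := le_antisymm h1 hs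
        have := (Finset.sum_eq_zero_iff_of_nonpos (fun k _ => hc k)).1 h2 k (Finset.mem_univ k)
        exact this
      obtain ⟨p, hp⟩ := hex
      -- find q : either a negative coordinate or any other coordinate
      have hexq : ∃ q, q ≠ p ∧ r q ≤ 0 ∧ (∀ k, k ≠ p → k ≠ q → r k = 0) := by
        by_cases hqn : ∃ q, r q < 0
        · obtain ⟨q, hq⟩ := hqn
          have hqp : q ≠ p := fun h => by rw [h] at hq; linarith
          refine ⟨q, hqp, hq.le, ?_⟩
          intro k hkp hkq
          have h1 : r k * r p ≤ 0 := hpair k p hkp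
          have h2 : r k * r q ≤ 0 := hpair k q hkq
          nlinarith
        · push_neg at hqn
          set p0 : Fin n := ⟨0, by omega⟩ with hp0
          set p1 : Fin n := ⟨1, by omega⟩ with hp1'
          have h01 : p0 ≠ p1 := by simp [hp0, hp1', Fin.ext_iff]
          refine ⟨if p = p0 then p1 else p0, ?_, ?_, ?_⟩
          · split_ifs with h
            · rw [h]; exact h01.symm
            · exact fun hc => h hc.symm
          · -- r at that coordinate is ≤ 0, in fact = 0
            have : ∀ k, k ≠ p → r k = 0 := by
              intro k hkp
              have h1 : r k * r p ≤ 0 := hpair k p hkp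
              have h2 : 0 ≤ r k := hqn k
              nlinarith
            split_ifs with h
            · rw [this p1 (by rw [h]; exact h01.symm)]
            · rw [this p0 (fun hc => h hc.symm)]
          · intro k hkp _
            have h1 : r k * r p ≤ 0 := hpair k p hkp
            have h2 : 0 ≤ r k := hqn k
            nlinarith
      obtain ⟨q, hqp, hq, hsupp⟩ := hexq
      have hrtwo : r = two p q (r p) (r q) := by
        funext k
        simp only [two]
        rcases eq_or_ne k p with rfl | hkp
        · rw [if_pos rfl]
        · rw [if_neg hkp]
          rcases eq_or_ne k q with rfl | hkq
          · rw [if_pos rfl]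
          · rw [if_neg hkq, hsupp k hkp hkq]
      have hdp : dp r = r p := by
        rw [dp]
        rw [Finset.sum_eq_single_of_mem p (Finset.mem_univ p)]
        · rw [if_pos hp.le]
        · intro k _ hkp
          rcases eq_or_ne k q with rfl | hkq
          · rcases lt_or_eq_of_le hq with h | h
            · rw [if_neg (not_le.mpr h)]
            · rw [h, if_pos le_rfl]
          · rw [hsupp k hkp hkq, if_pos le_rfl]
      have hdm : -(dm r) = r q := by
        rw [dm]
        rw [Finset.sum_eq_single_of_mem q (Finset.mem_univ q)]
        · rcases lt_or_eq_of_le hq with h | h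
          · rw [if_pos h]; ring
          · rw [h]; simp
        · intro k _ hkq
          rcases eq_or_ne k p with rfl | hkp
          · rw [if_neg (not_lt.mpr hp.le)]
          · rw [hsupp k hkp hkq, if_neg (lt_irrefl 0)]
      rw [hdp, hdm]
      have hsab : 0 ≤ r p + r q := by
        have := sum_two hqp.symm (r p) (r q)
        rw [← hrtwo] at this
        linarith [hs, this]
      have := place hn ρ hρ hM2 hM3 hM5 hU hqp.symm (r p) (r q) hsab
      rw [← hrtwo] at this
      exact this

/-- Claim 1 in the proof of Theorem 1 — under M1–M5, non-null attributes,
and the representation of the stochastic order by U(x) = Σ_k x_k, for any z ≠ 0 with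
Σ_k z_k ≥ 0 one has ρ(z,0) = ρ(d⁺(z)e₁ − d⁻(z)e₂, 0). -/
theorem stmt_2 {n : ℕ} (hn : 2 < n) (ρ : (Fin n → ℝ) → (Fin n → ℝ) → ℝ)
    (hρ : IsBCR ρ)
    (hM1 : M1 ρ) (hM2 : M2 ρ) (hM3 : M3 ρ) (hM4 : M4 ρ) (hM5 : M5 ρ)
    (hnonnull : ∀ k, ¬ NullAttr ρ k)
    (hU : ∀ x y : Fin n → ℝ, x ≠ y → (1/2 ≤ ρ x y ↔ ∑ k, y k ≤ ∑ k, x k)) :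
    ∀ z : Fin n → ℝ, z ≠ 0 → 0 ≤ ∑ k, z k →
      ρ z 0 = ρ (fun k => if (k : ℕ) = 0 then (∑ j, if 0 ≤ z j then z j else 0)
        else if (k : ℕ) = 1 then -(∑ j, if z j < 0 then -z j else 0) else 0) 0 := by
  intro z hz hs
  have hn' : 2 < n := hn
  have h := main_ind hn ρ hρ.2 hM2 hM3 hM5 hU
    ((Finset.univ.filter (fun k => z k ≠ 0)).card) z le_rfl hz hs
  have e : (fun k : Fin n => if (k : ℕ) = 0 then dp z
      else if (k : ℕ) = 1 then -(dm z) else 0) =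
      two ⟨0, by omega⟩ ⟨1, by omega⟩ (dp z) (-(dm z)) := by
    funext k
    simp [two, Fin.ext_iff]
  show ρ z 0 = ρ (fun k : Fin n => if (k : ℕ) = 0 then dp z
      else if (k : ℕ) = 1 then -(dm z) else 0) 0
  rw [e]
  exact h
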